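/- (Energy identity (9).) Let N ≥ 2, λ > 0, ζ ∈ ℝ, R > 0, and let f : ℝ → ℝ be continuous with F(u) := ∫₀ᵘ f(s) ds. Let u ∈ C²([0,R)) satisfy |u'(r)| < 1 on [0,R), u(0) = ζ, u'(0) = 0, and (u'(r)/√(1−u'(r)²))' + ((N−1)/r)·u'(r)/√(1−u'(r)²) + λ·f(u(r)) = 0 for all r ∈ (0,R). Then for every r ∈ (0,R): H(u'(r)) + (N−1)·∫₀^r u'(s)²/(s·√(1−u'(s)²)) ds = λ·(F(ζ) − F(u(r))), where H(t) := (1−√(1−t²))/√(1−t²). -/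

import Mathlib

open Set Filter MeasureTheory intervalIntegral Topology

lemma sqrt_one_add_sq_div (t : ℝ) (ht : |t| < 1) :
    Real.sqrt (1 + (t / Real.sqrt (1 - t ^ 2)) ^ 2) = 1 / Real.sqrt (1 - t ^ 2) := by
  have h1 : (0:ℝ) < 1 - t ^ 2 := by nlinarith [abs_nonneg t, sq_abs t, abs_lt.mp ht]
  have hs : Real.sqrt (1 - t ^ 2) ^ 2 = 1 - t ^ 2 := Real.sq_sqrt h1.le
  have hspos : 0 < Real.sqrt (1 - t ^ 2) := Real.sqrt_pos.mpr h1
  have : 1 + (t / Real.sqrt (1 - t ^ 2)) ^ 2 = (1 / Real.sqrt (1 - t ^ 2)) ^ 2 := by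
    field_simp
    linarith [hs]
  rw [this, Real.sqrt_sq (by positivity)]

/-- Energy identity (9): for a solution of the radial IVP on `[0,R)`,
`H(u'(r)) + (N-1)∫₀^r u'(s)²/(s√(1-u'(s)²)) ds = λ(F(ζ) - F(u(r)))` for all `r ∈ (0,R)`,
where `H(t) = (1-√(1-t²))/√(1-t²)` and `F(u) = ∫₀ᵘ f`. -/
theorem energy_identity
    (N : ℕ) (hN : 2 ≤ N) (lam : ℝ) (hlam : 0 < lam) (ζ R : ℝ) (hR : 0 < R)
    (f : ℝ → ℝ) (hf : Continuous f)
    (u u' : ℝ → ℝ)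
    (hu : ContDiffOn ℝ 2 u (Set.Ico 0 R))
    (hu' : ∀ r ∈ Set.Ico (0:ℝ) R, HasDerivWithinAt u (u' r) (Set.Ico 0 R) r)
    (hu'bd : ∀ r ∈ Set.Ico (0:ℝ) R, |u' r| < 1)
    (hu0 : u 0 = ζ) (hu'0 : u' 0 = 0)
    (hode : ∀ r ∈ Set.Ico (0:ℝ) R, 0 < r →
      HasDerivWithinAt (fun s => u' s / Real.sqrt (1 - (u' s) ^ 2))
        (-(((N : ℝ) - 1) / r * (u' r / Real.sqrt (1 - (u' r) ^ 2)) + lam * f (u r)))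
        (Set.Ico 0 R) r) :
    ∀ r ∈ Set.Ioo (0:ℝ) R,
      (1 - Real.sqrt (1 - (u' r) ^ 2)) / Real.sqrt (1 - (u' r) ^ 2) +
        ((N : ℝ) - 1) * ∫ s in (0:ℝ)..r, (u' s) ^ 2 / (s * Real.sqrt (1 - (u' s) ^ 2)) =
      lam * ((∫ s in (0:ℝ)..ζ, f s) - ∫ s in (0:ℝ)..(u r), f s) := by
  set S : Set ℝ := Set.Ico (0:ℝ) R with hS
  have hUD : UniqueDiffOn ℝ S := uniqueDiffOn_Ico 0 R
  -- u' is C¹ on S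
  have hu'eq : ∀ x ∈ S, u' x = derivWithin u S x := fun x hx =>
    ((hu' x hx).derivWithin (hUD x hx)).symm
  have hu'c1 : ContDiffOn ℝ 1 u' S :=
    (hu.derivWithin hUD (le_refl 2)).congr hu'eq
  have hu'cont : ContinuousOn u' S := hu'c1.continuousOn
  have hucont : ContinuousOn u S := hu.continuousOn
  -- positivity of sqrt
  have hpos : ∀ r ∈ S, 0 < Real.sqrt (1 - (u' r) ^ 2) := by
    intro r hr
    have h := hu'bd r hr
    have : (0:ℝ) < 1 - (u' r) ^ 2 := by nlinarith [abs_nonneg (u' r), sq_abs (u' r), abs_lt.mp h]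
    exact Real.sqrt_pos.mpr this
  set v : ℝ → ℝ := fun s => u' s / Real.sqrt (1 - (u' s) ^ 2) with hv
  have hvcont : ContinuousOn v S := by
    apply hu'cont.div
    · exact Real.continuous_sqrt.comp_continuousOn (by fun_prop)
    · intro x hx; exact (hpos x hx).ne'
  have hv0 : v 0 = 0 := by simp [hv, hu'0]
  -- derivative of u' within S
  set w : ℝ → ℝ := derivWithin u' S with hw
  have hwd : ∀ x ∈ S, HasDerivWithinAt u' (w x) S x := fun x hx =>
    ((hu'c1.differentiableOn one_ne_zero) x hx).hasDerivWithinAt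
  have hwcont : ContinuousOn w S := ((hu'c1.derivWithin hUD (by norm_num : (0:WithTop ℕ∞)+1 ≤ 1) : ContDiffOn ℝ 0 (derivWithin u' S) S)).continuousOn
  set g : ℝ → ℝ := fun s => (u' s) ^ 2 / (s * Real.sqrt (1 - (u' s) ^ 2)) with hg
  set F : ℝ → ℝ := fun x => ∫ s in (0:ℝ)..x, f s with hF
  have hFd : ∀ x : ℝ, HasDerivAt F (f x) x := fun x =>
    integral_hasDerivAt_right (hf.intervalIntegrable 0 x)
      (hf.stronglyMeasurable.stronglyMeasurableAtFilter) hf.continuousAt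
  have hFcont : Continuous F := by
    apply continuous_iff_continuousAt.mpr
    exact fun x => (hFd x).continuousAt
  -- g is continuous on Ioo 0 R
  have hgcont : ContinuousOn g (Set.Ioo 0 R) := by
    have h1 : ContinuousOn u' (Set.Ioo 0 R) := hu'cont.mono Ioo_subset_Ico_self
    apply ContinuousOn.div (by fun_prop)
    · exact ContinuousOn.mul continuousOn_id
        (Real.continuous_sqrt.comp_continuousOn (by fun_prop))
    · intro x hx
      exact (mul_pos hx.1 (hpos x (Ioo_subset_Ico_self hx))).ne'
  intro r hr
  obtain ⟨hr0, hrR⟩ := hr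
  have hIccS : Set.Icc 0 r ⊆ S := Icc_subset_Ico_iff hr0.le |>.mpr ⟨le_refl _, hrR⟩
  -- bound on |u'| : |u' s| ≤ C * s on Icc 0 r
  obtain ⟨C, hC⟩ : ∃ C, ∀ x ∈ Set.Icc (0:ℝ) r, ‖w x‖ ≤ C :=
    isCompact_Icc.exists_bound_of_continuousOn (hwcont.mono hIccS)
  have hu'lin : ∀ s ∈ Set.Icc (0:ℝ) r, |u' s| ≤ C * s := by
    intro s hs
    have h := (convex_Icc (0:ℝ) r).norm_image_sub_le_of_norm_hasDerivWithin_le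
      (f' := w) (fun x hx => (hwd x (hIccS hx)).mono hIccS) hC
      (Set.left_mem_Icc.mpr hr0.le) hs
    simpa [hu'0, Real.norm_eq_abs, abs_of_nonneg hs.1] using h
  obtain ⟨M, hM⟩ : ∃ M, ∀ x ∈ Set.Icc (0:ℝ) r, ‖v x‖ ≤ M :=
    isCompact_Icc.exists_bound_of_continuousOn (hvcont.mono hIccS)
  have hCnn : 0 ≤ C := le_trans (norm_nonneg _) (hC 0 ⟨le_rfl, hr0.le⟩)
  have hIocIcc : Set.Ioc (0:ℝ) r ⊆ Set.Icc 0 r := Ioc_subset_Icc_self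
  have hIocIoo : Set.Ioc (0:ℝ) r ⊆ Set.Ioo 0 R := fun x hx => ⟨hx.1, lt_of_le_of_lt hx.2 hrR⟩
  have hgbd : ∀ s ∈ Set.Ioc (0:ℝ) r, ‖g s‖ ≤ C * M := by
    intro s hs
    have hsS : s ∈ S := hIccS (hIocIcc hs)
    have hspos := hpos s hsS
    have hgeq : g s = (u' s / s) * v s := by
      simp only [hg, hv]
      field_simp
    rw [hgeq, norm_mul]
    have h2 : ‖u' s / s‖ ≤ C := by
      rw [Real.norm_eq_abs, abs_div, abs_of_pos hs.1]
      exact (div_le_iff₀ hs.1).mpr (hu'lin s (hIocIcc hs))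
    exact mul_le_mul h2 (hM s (hIocIcc hs)) (norm_nonneg _) hCnn
  have hgint : IntegrableOn g (Set.Ioc 0 r) := by
    refine ⟨(hgcont.mono hIocIoo).aestronglyMeasurable measurableSet_Ioc, ?_⟩
    exact MeasureTheory.HasFiniteIntegral.restrict_of_bounded (C := C * M)
      measure_Ioc_lt_top (MeasureTheory.ae_restrict_of_forall_mem measurableSet_Ioc hgbd)
  have hgiv : ∀ x ∈ Set.Ioc (0:ℝ) r, IntervalIntegrable g MeasureTheory.volume 0 x := fun x hx =>
    (intervalIntegrable_iff_integrableOn_Ioc_of_le hx.1.le).mpr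
      (hgint.mono_set (Ioc_subset_Ioc_right hx.2))
  set I : ℝ → ℝ := fun x => ∫ s in (0:ℝ)..x, g s with hI
  set E : ℝ → ℝ := fun x => Real.sqrt (1 + v x ^ 2) + ((N:ℝ) - 1) * I x + lam * F (u x) with hE
  have hEd : ∀ x ∈ Set.Ioc (0:ℝ) r, HasDerivAt E 0 x := by
    intro x hx
    have hxIoo : x ∈ Set.Ioo (0:ℝ) R := hIocIoo hx
    have hxS : x ∈ S := Ioo_subset_Ico_self hxIoo
    have hnbd : S ∈ 𝓝 x :=
      Filter.mem_of_superset (isOpen_Ioo.mem_nhds hxIoo) Ioo_subset_Ico_self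
    set D : ℝ := -(((N : ℝ) - 1) / x * v x + lam * f (u x)) with hD
    have hvd : HasDerivAt v D x := (hode x hxS hx.1).hasDerivAt hnbd
    have hinner : HasDerivAt (fun y => 1 + v y ^ 2) (2 * v x * D) x := by
      have := (hvd.pow 2).const_add 1
      simpa using this
    have hargpos : (0:ℝ) < 1 + v x ^ 2 := by positivity
    have hsq0 : HasDerivAt (fun y => Real.sqrt (1 + v y ^ 2))
        (1 / (2 * Real.sqrt (1 + v x ^ 2)) * (2 * v x * D)) x :=
      (Real.hasDerivAt_sqrt hargpos.ne').comp x hinner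
    have key : Real.sqrt (1 + v x ^ 2) = 1 / Real.sqrt (1 - (u' x) ^ 2) :=
      sqrt_one_add_sq_div _ (hu'bd x hxS)
    have hspos := hpos x hxS
    have hscalar : 1 / (2 * Real.sqrt (1 + v x ^ 2)) * (2 * v x * D) = u' x * D := by
      rw [key]
      simp only [hv]
      field_simp
    rw [hscalar] at hsq0
    have hId : HasDerivAt I (g x) x :=
      integral_hasDerivAt_right (hgiv x hx)
        ((hgcont.stronglyMeasurableAtFilter isOpen_Ioo) x hxIoo)
        (hgcont.continuousAt (isOpen_Ioo.mem_nhds hxIoo))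
    have hFu : HasDerivAt (fun y => F (u y)) (f (u x) * u' x) x :=
      (hFd (u x)).comp x ((hu' x hxS).hasDerivAt hnbd)
    have hsum := (hsq0.add (hId.const_mul ((N:ℝ) - 1))).add (hFu.const_mul lam)
    have hzero : u' x * D + ((N:ℝ) - 1) * g x + lam * (f (u x) * u' x) = 0 := by
      simp only [hD, hv, hg]
      field_simp
      ring
    rw [hzero] at hsum
    exact hsum
  -- E is constant on (0, r]
  have hEconst : ∀ a ∈ Set.Ioc (0:ℝ) r, E r = E a := by
    intro a ha
    have hcont : ContinuousOn E (Set.Icc a r) := fun x hx =>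
      ((hEd x ⟨lt_of_lt_of_le ha.1 hx.1, hx.2⟩).continuousAt).continuousWithinAt
    have hderiv : ∀ x ∈ Set.Ico a r, HasDerivWithinAt E 0 (Set.Ici x) x := fun x hx =>
      (hEd x ⟨lt_of_lt_of_le ha.1 hx.1, hx.2.le⟩).hasDerivWithinAt
    exact constant_of_has_deriv_right_zero hcont hderiv r (Set.right_mem_Icc.mpr ha.2)
  -- limits as a → 0⁺ within Ioc 0 r
  have hne : (𝓝[Set.Ioc (0:ℝ) r] (0:ℝ)).NeBot := by
    refine mem_closure_iff_nhdsWithin_neBot.mp ?_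
    rw [closure_Ioc hr0.ne]
    exact ⟨le_rfl, hr0.le⟩
  have hmono : 𝓝[Set.Ioc (0:ℝ) r] (0:ℝ) ≤ 𝓝[S] 0 :=
    nhdsWithin_mono 0 (fun x hx => ⟨hx.1.le, lt_of_le_of_lt hx.2 hrR⟩)
  have h0S : (0:ℝ) ∈ S := ⟨le_rfl, hR⟩
  have hvlim : Tendsto (fun a => Real.sqrt (1 + v a ^ 2)) (𝓝[Set.Ioc (0:ℝ) r] 0) (𝓝 1) := by
    have h1 : Tendsto v (𝓝[Set.Ioc (0:ℝ) r] 0) (𝓝 0) := by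
      have h2 := (hvcont 0 h0S).tendsto
      rw [hv0] at h2
      exact h2.mono_left hmono
    have h3 := (Real.continuous_sqrt.tendsto ((1:ℝ) + 0 ^ 2)).comp
      (tendsto_const_nhds.add (h1.pow 2))
    simpa [Function.comp_def] using h3
  have hIlim : Tendsto I (𝓝[Set.Ioc (0:ℝ) r] 0) (𝓝 0) := by
    have hb' : ∀ᶠ a in 𝓝[Set.Ioc (0:ℝ) r] (0:ℝ), ‖I a‖ ≤ C * M * a := by
      filter_upwards [self_mem_nhdsWithin] with a ha
      have hsub : Set.uIoc (0:ℝ) a ⊆ Set.Ioc 0 r := by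
        rw [Set.uIoc_of_le ha.1.le]
        exact Ioc_subset_Ioc_right ha.2
      have hb : ∀ x ∈ Set.uIoc (0:ℝ) a, ‖g x‖ ≤ C * M := fun x hx => hgbd x (hsub hx)
      have h4 := intervalIntegral.norm_integral_le_of_norm_le_const hb
      simpa [abs_of_nonneg ha.1.le] using h4
    have hg0 : Tendsto (fun a : ℝ => C * M * a) (𝓝[Set.Ioc (0:ℝ) r] 0) (𝓝 0) := by
      have h5 : Tendsto (fun a : ℝ => C * M * a) (𝓝 0) (𝓝 (C * M * 0)) :=
        (continuous_const.mul continuous_id).tendsto 0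
      simpa using h5.mono_left nhdsWithin_le_nhds
    exact squeeze_zero_norm' hb' hg0
  have hFlim : Tendsto (fun a => F (u a)) (𝓝[Set.Ioc (0:ℝ) r] 0) (𝓝 (F ζ)) := by
    have h1 : Tendsto u (𝓝[Set.Ioc (0:ℝ) r] 0) (𝓝 ζ) := by
      have h2 := (hucont 0 h0S).tendsto
      rw [hu0] at h2
      exact h2.mono_left hmono
    exact (hFcont.tendsto ζ).comp h1
  have hElim : Tendsto E (𝓝[Set.Ioc (0:ℝ) r] 0) (𝓝 (1 + lam * F ζ)) := by
    have h6 := (hvlim.add (hIlim.const_mul ((N:ℝ) - 1))).add (hFlim.const_mul lam)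
    have h7 : (1:ℝ) + ((N:ℝ) - 1) * 0 + lam * F ζ = 1 + lam * F ζ := by ring
    rw [h7] at h6
    exact h6
  have hEconst' : Tendsto E (𝓝[Set.Ioc (0:ℝ) r] 0) (𝓝 (E r)) := by
    apply Tendsto.congr' (f₁ := fun _ => E r)
    · filter_upwards [self_mem_nhdsWithin] with a ha
      exact hEconst a ha
    · exact tendsto_const_nhds
  have hkey : E r = 1 + lam * F ζ := tendsto_nhds_unique hEconst' hElim
  have hrS : r ∈ S := ⟨hr0.le, hrR⟩
  have key : Real.sqrt (1 + v r ^ 2) = 1 / Real.sqrt (1 - (u' r) ^ 2) :=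
    sqrt_one_add_sq_div _ (hu'bd r hrS)
  have hsposr := hpos r hrS
  have hHeq : (1 - Real.sqrt (1 - (u' r) ^ 2)) / Real.sqrt (1 - (u' r) ^ 2)
      = Real.sqrt (1 + v r ^ 2) - 1 := by
    rw [key]
    field_simp
  have hkey2 : Real.sqrt (1 + v r ^ 2) + ((N:ℝ) - 1) * I r + lam * F (u r)
      = 1 + lam * F ζ := hkey
  rw [hHeq]
  have hIr : I r = ∫ s in (0:ℝ)..r, (u' s) ^ 2 / (s * Real.sqrt (1 - (u' s) ^ 2)) := rfl
  have hFur : F (u r) = ∫ s in (0:ℝ)..(u r), f s := rfl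
  have hFz : F ζ = ∫ s in (0:ℝ)..ζ, f s := rfl
  rw [← hIr, ← hFur, ← hFz]
  linarith [hkey2]
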